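/- Let G be a bipartite graph with parts E and O of size n each. Let K(G) be the least integer K such that every pair (A,B) with A ⊆ E, B ⊆ O, |A| = |B| = K has an edge between A and B; and for 1 ≤ k ≤ K(G) let m(k,G) be the maximum over k-subsets A of either part of the number of vertices in the other part with no neighbor in A. Then for all t ≥ 0, i_t(G) ≤ 2·( C(n,t) + Σ_{k=1}^{min(K(G), ⌊t/2⌋)} C(n,k)·C(m(k,G), t−k) ). -/

import Mathlib

/-- A finset of vertices is independent: no edge inside. -/
def SimpleGraph.IsIndepFinset {V : Type*} (G : SimpleGraph V) (s : Finset V) : Prop :=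
  ∀ v ∈ s, ∀ w ∈ s, ¬ G.Adj v w

/-- `indepCount G t` = number of independent sets of size `t` in `G`. -/
noncomputable def indepCount {V : Type*} [Fintype V] (G : SimpleGraph V) (t : ℕ) : ℕ :=
  Nat.card {s : Finset V // s.card = t ∧ G.IsIndepFinset s}

/-- `indepTotal G` = total number of independent sets in `G` (including ∅). -/
noncomputable def indepTotal {V : Type*} [Fintype V] (G : SimpleGraph V) : ℕ :=
  Nat.card {s : Finset V // G.IsIndepFinset s}

open Classical in
/-- The independence polynomial `P(G,x) = Σ_t i_t(G) xᵗ`. -/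
noncomputable def indPoly {V : Type*} [Fintype V] (G : SimpleGraph V) (x : ℝ) : ℝ :=
  ∑ s ∈ Finset.univ.filter (fun s : Finset V => G.IsIndepFinset s), x ^ s.card

open Finset in
open Classical in
lemma helper_side {V : Type*} [Fintype V] [DecidableEq V]
    (G : SimpleGraph V) (n K t : ℕ) (m : ℕ → ℕ) (A B : Finset V)
    (hdisj : Disjoint A B) (hunion : A ∪ B = Finset.univ)
    (hA : A.card = n) (hB : B.card = n)
    (hK : ∀ A' ⊆ A, ∀ B' ⊆ B, A'.card = K → B'.card = K →
      ∃ a ∈ A', ∃ b ∈ B', G.Adj a b)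
    (hm : ∀ k, 1 ≤ k → k ≤ K → ∀ A' ⊆ A, A'.card = k → ∀ C : Finset V,
      (∀ w, w ∈ C ↔ w ∈ B ∧ ∀ a ∈ A', ¬ G.Adj a w) → C.card ≤ m k) :
    ((Finset.univ.filter (fun s : Finset V => s.card = t ∧ G.IsIndepFinset s)).filter
      (fun s => (s ∩ A).card ≤ (s ∩ B).card)).card ≤
      n.choose t + ∑ k ∈ Finset.Icc 1 (min K (t / 2)), n.choose k * (m k).choose (t - k) := by
  set FA := ((Finset.univ.filter (fun s : Finset V => s.card = t ∧ G.IsIndepFinset s)).filter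
      (fun s => (s ∩ A).card ≤ (s ∩ B).card)) with hFA
  have hsplit : ∀ s ∈ FA, (s ∩ A) ∪ (s ∩ B) = s := by
    intro s _
    rw [← Finset.inter_union_distrib_left, hunion, Finset.inter_univ]
  have hcards : ∀ s ∈ FA, (s ∩ A).card + (s ∩ B).card = t := by
    intro s hs
    have hd : Disjoint (s ∩ A) (s ∩ B) :=
      hdisj.mono (Finset.inter_subset_right) (Finset.inter_subset_right)
    have := Finset.card_union_of_disjoint hd
    rw [hsplit s hs] at this
    simp only [hFA, Finset.mem_filter] at hs
    omega
  have hfib : FA.card = ∑ k ∈ Finset.range (t + 1),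
      (FA.filter (fun s => (s ∩ A).card = k)).card := by
    apply Finset.card_eq_sum_card_fiberwise
    intro s hs
    have := hcards s hs
    simp only [Finset.mem_range, Finset.coe_range, Set.mem_Iio]; omega
  rw [hfib]
  have h0 : 0 ∈ Finset.range (t + 1) := by simp
  rw [← Finset.sum_erase_add _ _ h0]
  have herase : (Finset.range (t + 1)).erase 0 = Finset.Icc 1 t := by
    ext k; simp [Finset.mem_erase, Finset.mem_range, Finset.mem_Icc]; omega
  rw [herase, add_comm]
  refine Nat.add_le_add ?_ ?_
  · -- k = 0 fiber: s ⊆ B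
    have hsub : (FA.filter (fun s => (s ∩ A).card = 0)) ⊆ B.powersetCard t := by
      intro s hs
      simp only [Finset.mem_filter, hFA] at hs
      obtain ⟨⟨⟨-, hcard, -⟩, -⟩, hk0⟩ := hs
      rw [Finset.mem_powersetCard]
      refine ⟨fun v hv => ?_, hcard⟩
      have hv' : v ∈ A ∪ B := by rw [hunion]; exact Finset.mem_univ v
      rcases Finset.mem_union.1 hv' with h | h
      · exact absurd (Finset.card_eq_zero.1 hk0 ▸ Finset.mem_inter.2 ⟨hv, h⟩)
          (Finset.notMem_empty v)
      · exact h
    calc (FA.filter (fun s => (s ∩ A).card = 0)).card ≤ (B.powersetCard t).card :=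
          Finset.card_le_card hsub
      _ = n.choose t := by rw [Finset.card_powersetCard, hB]
  · -- sum over k ∈ Icc 1 t
    have step1 : ∀ k ∈ Finset.Icc 1 t, (FA.filter (fun s => (s ∩ A).card = k)).card ≤
        (if k ≤ min K (t / 2) then n.choose k * (m k).choose (t - k) else 0) := by
      intro k hk
      rw [Finset.mem_Icc] at hk
      by_cases hcase : k ≤ min K (t / 2)
      · rw [if_pos hcase]
        have hkK : k ≤ K := le_trans hcase (min_le_left _ _)
        -- fiber ⊆ biUnion over A' of unions A' ∪ B'
        have hsub : (FA.filter (fun s => (s ∩ A).card = k)) ⊆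
            (A.powersetCard k).biUnion (fun A' =>
              ((B.filter (fun w => ∀ a ∈ A', ¬ G.Adj a w)).powersetCard (t - k)).image
                (fun B' => A' ∪ B')) := by
          intro s hs
          have hsFA : s ∈ FA := (Finset.mem_filter.1 hs).1
          have hkk : (s ∩ A).card = k := (Finset.mem_filter.1 hs).2
          have hcardsum := hcards s hsFA
          have hindep : G.IsIndepFinset s := by
            have := (Finset.mem_filter.1 hsFA).1
            exact (Finset.mem_filter.1 this).2.2
          rw [Finset.mem_biUnion]
          refine ⟨s ∩ A, ?_, ?_⟩
          · rw [Finset.mem_powersetCard]; exact ⟨Finset.inter_subset_right, hkk⟩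
          · rw [Finset.mem_image]
            refine ⟨s ∩ B, ?_, hsplit s hsFA⟩
            rw [Finset.mem_powersetCard]
            constructor
            · intro w hw
              rw [Finset.mem_filter]
              refine ⟨(Finset.mem_inter.1 hw).2, fun a ha => ?_⟩
              exact hindep a (Finset.mem_inter.1 ha).1 w (Finset.mem_inter.1 hw).1
            · omega
        calc (FA.filter (fun s => (s ∩ A).card = k)).card
            ≤ ∑ A' ∈ A.powersetCard k,
              (((B.filter (fun w => ∀ a ∈ A', ¬ G.Adj a w)).powersetCard (t - k)).image
                (fun B' => A' ∪ B')).card :=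
              le_trans (Finset.card_le_card hsub) (Finset.card_biUnion_le)
          _ ≤ ∑ A' ∈ A.powersetCard k, (m k).choose (t - k) := by
              apply Finset.sum_le_sum
              intro A' hA'
              rw [Finset.mem_powersetCard] at hA'
              calc _ ≤ ((B.filter (fun w => ∀ a ∈ A', ¬ G.Adj a w)).powersetCard (t - k)).card :=
                    Finset.card_image_le
                _ = ((B.filter (fun w => ∀ a ∈ A', ¬ G.Adj a w)).card).choose (t - k) :=
                    Finset.card_powersetCard _ _
                _ ≤ (m k).choose (t - k) :=
                    Nat.choose_le_choose _ (hm k hk.1 hkK A' hA'.1 hA'.2 _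
                      (fun w => Finset.mem_filter))
          _ = n.choose k * (m k).choose (t - k) := by
              rw [Finset.sum_const, Finset.card_powersetCard, hA, smul_eq_mul]
      · rw [if_neg hcase]
        rw [Nat.le_zero, Finset.card_eq_zero, Finset.eq_empty_iff_forall_notMem]
        intro s hs
        have hsFA : s ∈ FA := (Finset.mem_filter.1 hs).1
        have hkk : (s ∩ A).card = k := (Finset.mem_filter.1 hs).2
        have hle : (s ∩ A).card ≤ (s ∩ B).card := (Finset.mem_filter.1 hsFA).2
        have hcardsum := hcards s hsFA
        have hindep : G.IsIndepFinset s := by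
          have := (Finset.mem_filter.1 hsFA).1
          exact (Finset.mem_filter.1 this).2.2
        have ht2 : k ≤ t / 2 := by omega
        have hKk : ¬ K < k := by
          intro hKlt
          obtain ⟨A'', hA''sub, hA''card⟩ := Finset.exists_subset_card_eq
            (show K ≤ (s ∩ A).card by omega)
          obtain ⟨B'', hB''sub, hB''card⟩ := Finset.exists_subset_card_eq
            (show K ≤ (s ∩ B).card by omega)
          obtain ⟨a, ha, b, hb, hadj⟩ := hK A''
            (hA''sub.trans Finset.inter_subset_right) B''
            (hB''sub.trans Finset.inter_subset_right) hA''card hB''card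
          exact hindep a (Finset.mem_inter.1 (hA''sub ha)).1 b
            (Finset.mem_inter.1 (hB''sub hb)).1 hadj
        omega
    calc ∑ k ∈ Finset.Icc 1 t, (FA.filter (fun s => (s ∩ A).card = k)).card
        ≤ ∑ k ∈ Finset.Icc 1 t,
          (if k ≤ min K (t / 2) then n.choose k * (m k).choose (t - k) else 0) :=
          Finset.sum_le_sum step1
      _ = ∑ k ∈ Finset.Icc 1 (min K (t / 2)),
          (if k ≤ min K (t / 2) then n.choose k * (m k).choose (t - k) else 0) := by
          refine (Finset.sum_subset ?_ ?_).symm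
          · intro k hk
            rw [Finset.mem_Icc] at hk ⊢
            refine ⟨hk.1, le_trans hk.2 ?_⟩
            exact le_trans (min_le_right _ _) (Nat.div_le_self t 2)
          · intro k hk1 hk2
            rw [Finset.mem_Icc] at hk1
            simp only [Finset.mem_Icc, Nat.le_min, not_and, not_le] at hk2
            rw [if_neg]
            rw [Nat.le_min, not_and_or, not_le, not_le]
            omega
      _ = ∑ k ∈ Finset.Icc 1 (min K (t / 2)), n.choose k * (m k).choose (t - k) := by
          apply Finset.sum_congr rfl
          intro k hk
          rw [Finset.mem_Icc] at hk
          rw [if_pos hk.2]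


theorem bipartite_upper_bound {V : Type*} [Fintype V] [DecidableEq V]
    (G : SimpleGraph V) [DecidableRel G.Adj] (n : ℕ)
    (A B : Finset V) (hdisj : Disjoint A B) (hunion : A ∪ B = Finset.univ)
    (hA : A.card = n) (hB : B.card = n)
    (hbip : ∀ v w, G.Adj v w → (v ∈ A ∧ w ∈ B) ∨ (v ∈ B ∧ w ∈ A))
    (K : ℕ)
    (hK : IsLeast {K' : ℕ | ∀ A' ⊆ A, ∀ B' ⊆ B, A'.card = K' → B'.card = K' →
      ∃ a ∈ A', ∃ b ∈ B', G.Adj a b} K)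
    (m : ℕ → ℕ)
    (hm : ∀ k, 1 ≤ k → k ≤ K → IsGreatest {c : ℕ |
      (∃ A' ⊆ A, A'.card = k ∧ c = (B.filter (fun w => ∀ a ∈ A', ¬ G.Adj a w)).card) ∨
      (∃ B' ⊆ B, B'.card = k ∧ c = (A.filter (fun w => ∀ b ∈ B', ¬ G.Adj b w)).card)} (m k))
    (t : ℕ) :
    indepCount G t ≤ 2 * (n.choose t +
      ∑ k ∈ Finset.Icc 1 (min K (t / 2)), n.choose k * (m k).choose (t - k)) := by
  classical
  have hcount : indepCount G t =
      (Finset.univ.filter (fun s : Finset V => s.card = t ∧ G.IsIndepFinset s)).card := by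
    rw [indepCount, Nat.card_eq_fintype_card]
    convert Fintype.card_subtype _
  rw [hcount]
  set F := (Finset.univ.filter (fun s : Finset V => s.card = t ∧ G.IsIndepFinset s)) with hF
  have hsub : F ⊆ (F.filter (fun s => (s ∩ A).card ≤ (s ∩ B).card)) ∪
      (F.filter (fun s => (s ∩ B).card ≤ (s ∩ A).card)) := by
    intro s hs
    rcases le_total (s ∩ A).card (s ∩ B).card with h | h
    · exact Finset.mem_union_left _ (Finset.mem_filter.2 ⟨hs, h⟩)
    · exact Finset.mem_union_right _ (Finset.mem_filter.2 ⟨hs, h⟩)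
  have hKA : ∀ A' ⊆ A, ∀ B' ⊆ B, A'.card = K → B'.card = K →
      ∃ a ∈ A', ∃ b ∈ B', G.Adj a b := hK.1
  have hKB : ∀ B' ⊆ B, ∀ A' ⊆ A, B'.card = K → A'.card = K →
      ∃ b ∈ B', ∃ a ∈ A', G.Adj b a := by
    intro B' hB' A' hA' hcB hcA
    obtain ⟨a, ha, b, hb, hadj⟩ := hK.1 A' hA' B' hB' hcA hcB
    exact ⟨b, hb, a, ha, hadj.symm⟩
  have hmA : ∀ k, 1 ≤ k → k ≤ K → ∀ A' ⊆ A, A'.card = k → ∀ C : Finset V,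
      (∀ w, w ∈ C ↔ w ∈ B ∧ ∀ a ∈ A', ¬ G.Adj a w) → C.card ≤ m k := by
    intro k h1 h2 A' hA' hc C hC
    have : C = B.filter (fun w => ∀ a ∈ A', ¬ G.Adj a w) := by
      ext w; rw [hC, Finset.mem_filter]
    rw [this]
    exact (hm k h1 h2).2 (Or.inl ⟨A', hA', hc, rfl⟩)
  have hmB : ∀ k, 1 ≤ k → k ≤ K → ∀ B' ⊆ B, B'.card = k → ∀ C : Finset V,
      (∀ w, w ∈ C ↔ w ∈ A ∧ ∀ b ∈ B', ¬ G.Adj b w) → C.card ≤ m k := by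
    intro k h1 h2 B' hB' hc C hC
    have : C = A.filter (fun w => ∀ b ∈ B', ¬ G.Adj b w) := by
      ext w; rw [hC, Finset.mem_filter]
    rw [this]
    exact (hm k h1 h2).2 (Or.inr ⟨B', hB', hc, rfl⟩)
  have h1 := helper_side G n K t m A B hdisj hunion hA hB hKA hmA
  have h2 := helper_side G n K t m B A hdisj.symm (by rw [Finset.union_comm]; exact hunion)
    hB hA hKB hmB
  calc F.card ≤ ((F.filter (fun s => (s ∩ A).card ≤ (s ∩ B).card)) ∪
        (F.filter (fun s => (s ∩ B).card ≤ (s ∩ A).card))).card := Finset.card_le_card hsub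
    _ ≤ (F.filter (fun s => (s ∩ A).card ≤ (s ∩ B).card)).card +
        (F.filter (fun s => (s ∩ B).card ≤ (s ∩ A).card)).card := Finset.card_union_le _ _
    _ ≤ _ := by rw [two_mul]; exact Nat.add_le_add h1 h2
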